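/- Fix integers a and b and a residue α ∈ {0,1,2,3}. Then there exists a rational function g(p) (a quotient of two polynomials with rational coefficients, the denominator nonvanishing for all sufficiently large p) such that for all sufficiently large positive integers p, K(a+2p, b+2p; 4p+α-1) = (-1)^p C(2p-1, p) g(p). -/

import Mathlib

open Polynomial Finset

/-- The Kravchuk polynomial `K(a, b; n)`: the coefficient of `z^a` in
`(1+z)^(n-b) * (1-z)^b`. -/
noncomputable def kravchuk (a b n : ℕ) : ℤ :=
  ((1 + X : ℤ[X]) ^ (n - b) * (1 - X) ^ b).coeff a

lemma kr_neg_one_pow_congr (e f : ℕ) (h : e % 2 = f % 2) : ((-1:ℚ))^e = (-1)^f := by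
  conv_lhs => rw [← Nat.div_add_mod e 2]
  conv_rhs => rw [← Nat.div_add_mod f 2]
  rw [h, pow_add, pow_add, pow_mul, pow_mul]
  norm_num

lemma fact_shift (b c : ℕ) :
    (((b + c).factorial : ℚ)) = (b.factorial : ℚ) * ∏ i ∈ Finset.range c, ((b:ℚ) + (i+1)) := by
  induction c with
  | zero => simp
  | succ n ih =>
    rw [Finset.prod_range_succ, ← Nat.add_assoc, Nat.factorial_succ]
    push_cast
    rw [ih]; ring

noncomputable def shiftProd (c : ℕ) (L : ℚ[X]) : ℚ[X] :=
  ∏ i ∈ Finset.range c, (L + C ((i:ℚ)+1))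

lemma fact_mul_shiftProd (b c : ℕ) (L : ℚ[X]) (x : ℚ) (hx : L.eval x = b) :
    (b.factorial : ℚ) * (shiftProd c L).eval x = ((b+c).factorial : ℚ) := by
  rw [fact_shift b c, shiftProd, eval_prod]
  congr 1
  exact Finset.prod_congr rfl fun i _ => by simp [hx]

def NiceR (f : ℕ → ℚ) : Prop :=
  ∃ P Q : ℚ[X], ∃ N : ℕ, ∀ p : ℕ, N ≤ p →
    Q.eval (p:ℚ) ≠ 0 ∧ f p * Q.eval (p:ℚ) = (((2*p-1).choose p : ℕ) : ℚ) * P.eval (p:ℚ)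

lemma niceR_zero : NiceR (fun _ => 0) :=
  ⟨0, 1, 0, fun p _ => by simp⟩

lemma niceR_add {f g : ℕ → ℚ} (hf : NiceR f) (hg : NiceR g) : NiceR (fun p => f p + g p) := by
  obtain ⟨P1, Q1, N1, h1⟩ := hf
  obtain ⟨P2, Q2, N2, h2⟩ := hg
  refine ⟨P1 * Q2 + P2 * Q1, Q1 * Q2, max N1 N2, fun p hp => ?_⟩
  obtain ⟨hq1, he1⟩ := h1 p (le_trans (le_max_left _ _) hp)
  obtain ⟨hq2, he2⟩ := h2 p (le_trans (le_max_right _ _) hp)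
  refine ⟨by simp [hq1, hq2], ?_⟩
  simp only [eval_mul, eval_add]
  linear_combination Q2.eval (p:ℚ) * he1 + Q1.eval (p:ℚ) * he2

lemma niceR_const_mul (c : ℚ) {f : ℕ → ℚ} (hf : NiceR f) : NiceR (fun p => c * f p) := by
  obtain ⟨P, Q, N, h⟩ := hf
  refine ⟨C c * P, Q, N, fun p hp => ?_⟩
  obtain ⟨hq, he⟩ := h p hp
  refine ⟨hq, ?_⟩
  simp only [eval_mul, eval_C]
  rw [mul_assoc, he]; ring

lemma niceR_congr {f g : ℕ → ℚ} (N0 : ℕ) (h : ∀ p, N0 ≤ p → f p = g p) (hf : NiceR f) :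
    NiceR g := by
  obtain ⟨P, Q, N, hN⟩ := hf
  refine ⟨P, Q, max N N0, fun p hp => ?_⟩
  obtain ⟨hq, he⟩ := hN p (le_trans (le_max_left _ _) hp)
  exact ⟨hq, by rw [← h p (le_trans (le_max_right _ _) hp)]; exact he⟩

lemma niceR_sum (s : Finset ℕ) (F : ℕ → ℕ → ℚ) (h : ∀ j ∈ s, NiceR (F j)) :
    NiceR (fun p => ∑ j ∈ s, F j p) := by
  induction s using Finset.cons_induction with
  | empty => simpa using niceR_zero
  | cons a s ha ih =>
    simp only [Finset.sum_cons]
    exact niceR_add (h a (Finset.mem_cons_self a s))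
      (ih fun j hj => h j (Finset.mem_cons_of_mem hj))

lemma niceR_choose (m k : ℤ) :
    NiceR (fun p => (((2*(p:ℤ)+m).toNat.choose ((p:ℤ)+k).toNat : ℕ) : ℚ)) := by
  refine ⟨shiftProd (m.natAbs + 2) (C 2 * X - C 1) *
      (shiftProd ((k.natAbs - k).toNat) (X + C (k:ℚ)) *
       shiftProd (((m-k).natAbs - (m - k)).toNat) (X + C ((m:ℚ) - k))),
    shiftProd ((m.natAbs + 1 - m).toNat) (C (m:ℚ) + C 2 * X) *
      (shiftProd k.natAbs X * shiftProd ((m-k).natAbs + 1) (X - C 1)),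
    m.natAbs + k.natAbs + (m-k).natAbs + 1, fun p hp => ?_⟩
  set M : ℕ := (2*(p:ℤ)+m).toNat with hMdef
  set r : ℕ := ((p:ℤ)+k).toNat with hrdef
  have hp1 : 1 ≤ p := by omega
  have hM : (M:ℤ) = 2*p+m := by omega
  have hr : (r:ℤ) = p+k := by omega
  have hrM : r ≤ M := by omega
  have hMr : ((M - r : ℕ) : ℤ) = (p:ℤ) + m - k := by omega
  have hMq : (M:ℚ) = 2*(p:ℚ) + (m:ℚ) := by exact_mod_cast hM
  have hrq : (r:ℚ) = (p:ℚ) + (k:ℚ) := by exact_mod_cast hr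
  have hMrq : ((M - r : ℕ):ℚ) = (p:ℚ) + (m:ℚ) - (k:ℚ) := by exact_mod_cast hMr
  -- the six factorial identities
  have hE1 : ((M.factorial : ℚ)) * (shiftProd ((m.natAbs + 1 - m).toNat) (C (m:ℚ) + C 2 * X)).eval (p:ℚ)
      = ((2*p + (m.natAbs+1)).factorial : ℚ) := by
    have h := fact_mul_shiftProd M ((m.natAbs + 1 - m).toNat) (C (m:ℚ) + C 2 * X) (p:ℚ)
      (by simp; rw [hMq]; ring)
    rwa [show M + ((m.natAbs + 1 - m).toNat) = 2*p + (m.natAbs+1) by omega] at h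
  have hF1 : (((2*p-1).factorial : ℚ)) * (shiftProd (m.natAbs + 2) (C 2 * X - C 1)).eval (p:ℚ)
      = ((2*p + (m.natAbs+1)).factorial : ℚ) := by
    have h := fact_mul_shiftProd (2*p-1) (m.natAbs + 2) (C 2 * X - C 1) (p:ℚ)
      (by simp; push_cast [show ((2*p-1 : ℕ) : ℚ) = 2*(p:ℚ) - 1 by push_cast [Nat.cast_sub (by omega : 1 ≤ 2*p)]; ring]; ring)
    rwa [show (2*p-1) + (m.natAbs + 2) = 2*p + (m.natAbs+1) by omega] at h
  have hE2 : ((p.factorial : ℚ)) * (shiftProd k.natAbs X).eval (p:ℚ)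
      = ((p + k.natAbs).factorial : ℚ) :=
    fact_mul_shiftProd p k.natAbs X (p:ℚ) (by simp)
  have hF2 : ((r.factorial : ℚ)) * (shiftProd ((k.natAbs - k).toNat) (X + C (k:ℚ))).eval (p:ℚ)
      = ((p + k.natAbs).factorial : ℚ) := by
    have h := fact_mul_shiftProd r ((k.natAbs - k).toNat) (X + C (k:ℚ)) (p:ℚ)
      (by simp; rw [hrq])
    rwa [show r + ((k.natAbs - k).toNat) = p + k.natAbs by omega] at h
  have hE3 : (((p-1).factorial : ℚ)) * (shiftProd ((m-k).natAbs + 1) (X - C 1)).eval (p:ℚ)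
      = ((p + (m-k).natAbs).factorial : ℚ) := by
    have h := fact_mul_shiftProd (p-1) ((m-k).natAbs + 1) (X - C 1) (p:ℚ)
      (by simp [Nat.cast_sub hp1])
    rwa [show (p-1) + ((m-k).natAbs + 1) = p + (m-k).natAbs by omega] at h
  have hF3 : (((M - r).factorial : ℚ)) * (shiftProd (((m-k).natAbs - (m - k)).toNat) (X + C ((m:ℚ) - k))).eval (p:ℚ)
      = ((p + (m-k).natAbs).factorial : ℚ) := by
    have h := fact_mul_shiftProd (M - r) (((m-k).natAbs - (m - k)).toNat) (X + C ((m:ℚ) - k)) (p:ℚ)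
      (by simp; rw [hMrq]; ring)
    rwa [show (M - r) + (((m-k).natAbs - (m - k)).toNat) = p + (m-k).natAbs by omega] at h
  have factQ : ∀ n : ℕ, ((n.factorial : ℚ)) ≠ 0 := fun n => Nat.cast_ne_zero.2 n.factorial_ne_zero
  have hne : ∀ (c : ℕ) (L : ℚ[X]) (b : ℕ) (T : ℕ),
      (b.factorial : ℚ) * (shiftProd c L).eval (p:ℚ) = (T.factorial : ℚ) →
      (shiftProd c L).eval (p:ℚ) ≠ 0 := by
    intro c L b T h hzero
    rw [hzero, mul_zero] at h
    exact factQ T h.symm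
  have hq1 := hne _ _ _ _ hE1
  have hq2 := hne _ _ _ _ hE2
  have hq3 := hne _ _ _ _ hE3
  constructor
  · simp only [eval_mul]
    exact mul_ne_zero hq1 (mul_ne_zero hq2 hq3)
  · have hcc1 : ((M.choose r : ℕ) : ℚ) * ((r.factorial : ℚ) * ((M-r).factorial : ℚ))
        = (M.factorial : ℚ) := by
      rw [← Nat.cast_mul, ← Nat.cast_mul, ← mul_assoc]
      exact_mod_cast congrArg (Nat.cast (R := ℚ)) (Nat.choose_mul_factorial_mul_factorial hrM)
    have hcc2 : (((2*p-1).choose p : ℕ) : ℚ) * ((p.factorial : ℚ) * ((p-1).factorial : ℚ))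
        = ((2*p-1).factorial : ℚ) := by
      have := Nat.choose_mul_factorial_mul_factorial (show p ≤ 2*p-1 by omega)
      rw [show 2*p-1-p = p-1 by omega] at this
      rw [← Nat.cast_mul, ← Nat.cast_mul, ← mul_assoc]
      exact_mod_cast congrArg (Nat.cast (R := ℚ)) this
    have hD : ((r.factorial : ℚ) * ((M-r).factorial : ℚ) * ((p.factorial : ℚ) * ((p-1).factorial : ℚ))) ≠ 0 :=
      mul_ne_zero (mul_ne_zero (factQ _) (factQ _)) (mul_ne_zero (factQ _) (factQ _))
    apply mul_right_cancel₀ hD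
    simp only [eval_mul]
    set e1 := (shiftProd ((m.natAbs + 1 - m).toNat) (C (m:ℚ) + C 2 * X)).eval (p:ℚ)
    set e2 := (shiftProd k.natAbs X).eval (p:ℚ)
    set e3 := (shiftProd ((m-k).natAbs + 1) (X - C 1)).eval (p:ℚ)
    set f1 := (shiftProd (m.natAbs + 2) (C 2 * X - C 1)).eval (p:ℚ)
    set f2 := (shiftProd ((k.natAbs - k).toNat) (X + C (k:ℚ))).eval (p:ℚ)
    set f3 := (shiftProd (((m-k).natAbs - (m - k)).toNat) (X + C ((m:ℚ) - k))).eval (p:ℚ)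
    calc ((M.choose r : ℕ) : ℚ) * (e1 * (e2 * e3)) * ((r.factorial : ℚ) * ((M-r).factorial : ℚ) * ((p.factorial : ℚ) * ((p-1).factorial : ℚ)))
        = (((M.choose r : ℕ) : ℚ) * ((r.factorial : ℚ) * ((M-r).factorial : ℚ))) * (((p.factorial:ℚ)) * ((p-1).factorial:ℚ)) * (e1 * e2 * e3) := by ring
      _ = (M.factorial : ℚ) * (((p.factorial:ℚ)) * ((p-1).factorial:ℚ)) * (e1 * e2 * e3) := by rw [hcc1]
      _ = ((M.factorial : ℚ) * e1) * ((p.factorial : ℚ) * e2) * (((p-1).factorial : ℚ) * e3) := by ring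
      _ = ((2*p + (m.natAbs+1)).factorial : ℚ) * ((p + k.natAbs).factorial : ℚ) * ((p + (m-k).natAbs).factorial : ℚ) := by rw [hE1, hE2, hE3]
      _ = (((2*p-1).factorial : ℚ) * f1) * ((r.factorial : ℚ) * f2) * (((M-r).factorial : ℚ) * f3) := by rw [hF1, hF2, hF3]
      _ = (((2*p-1).factorial : ℚ)) * ((r.factorial:ℚ) * ((M-r).factorial:ℚ)) * (f1 * f2 * f3) := by ring
      _ = ((((2*p-1).choose p : ℕ) : ℚ) * ((p.factorial : ℚ) * ((p-1).factorial : ℚ))) * ((r.factorial:ℚ) * ((M-r).factorial:ℚ)) * (f1 * f2 * f3) := by rw [hcc2]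
      _ = (((2*p-1).choose p : ℕ) : ℚ) * (f1 * (f2 * f3)) * ((r.factorial : ℚ) * ((M-r).factorial : ℚ) * ((p.factorial : ℚ) * ((p-1).factorial : ℚ))) := by ring

lemma coeff_one_sub_X_pow (M c : ℕ) :
    ((1 - X : ℤ[X])^M).coeff c = (-1)^c * (M.choose c : ℤ) := by
  have h1 : (1 - X : ℤ[X]) = -1 * (X + C (-1)) := by
    rw [C_neg, C_1]; ring
  rw [h1, mul_pow, ← C_1, ← C_neg, ← C_pow, coeff_C_mul, coeff_X_add_C_pow]
  rcases le_or_gt c M with h | h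
  · rw [show M = (M - c) + c by omega]
    ring_nf
    rw [show M - c + c - c = M - c by omega]
    have h2 : ((-1:ℤ))^(M-c) * (-1)^(M-c) = 1 := by
      rw [← pow_add, ← two_mul, pow_mul]; norm_num
    linear_combination (((M - c + c).choose c : ℤ) * (-1)^c) * h2
  · rw [Nat.choose_eq_zero_of_lt h]
    simp

lemma coeff_one_sub_sq_pow (M e : ℕ) :
    ((1 - X^2 : ℤ[X])^M).coeff e =
      if e % 2 = 0 then (-1)^(e/2) * (M.choose (e/2) : ℤ) else 0 := by
  have h : ((1 - X^2 : ℤ[X])^M) = expand ℤ 2 ((1 - X)^M) := by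
    rw [map_pow, map_sub, map_one, expand_X]
  rw [h, coeff_expand (by norm_num)]
  rcases Nat.even_or_odd e with he | he
  · rw [if_pos (even_iff_two_dvd.mp he), if_pos (Nat.even_iff.mp he), coeff_one_sub_X_pow]
  · have he' : e % 2 = 1 := Nat.odd_iff.mp he
    rw [if_neg (by omega), if_neg (by omega)]

lemma coeff_mul_expand (H G : ℤ[X]) (D n : ℕ) (hd : G.natDegree < D) (hn : D ≤ n) :
    (H * G).coeff n = ∑ j ∈ Finset.range D, G.coeff j * H.coeff (n - j) := by
  conv_lhs => rw [G.as_sum_range' D hd, Finset.mul_sum]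
  rw [finset_sum_coeff]
  refine Finset.sum_congr rfl fun j hj => ?_
  have hjn : j ≤ n := le_trans (le_of_lt (Finset.mem_range.mp hj)) hn
  rw [show n = (n - j) + j by omega, coeff_mul_monomial]
  ring_nf
  rw [show n - j + j - j = n - j by omega]
  ring

lemma main_aux (a m : ℤ) (u v : ℕ) :
    NiceR (fun p => (-1:ℚ)^p *
      ((((1 - X^2 : ℤ[X])^((2*(p:ℤ)+m).toNat) * ((1+X)^u * (1-X)^v)).coeff
          ((a + 2*(p:ℤ)).toNat) : ℤ) : ℚ)) := by
  set G : ℤ[X] := (1+X)^u * (1-X)^v with hG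
  have hGdeg : G.natDegree < u + v + 1 := by
    have h1 : ((1+X:ℤ[X])^u).natDegree ≤ u := by
      refine le_trans (natDegree_pow_le) ?_
      have h0 : (1+X:ℤ[X]).natDegree ≤ 1 := le_trans (natDegree_add_le 1 X) (by simp)
      calc u * (1+X:ℤ[X]).natDegree ≤ u * 1 := Nat.mul_le_mul_left u h0
        _ = u := by ring
    have h2 : ((1-X:ℤ[X])^v).natDegree ≤ v := by
      refine le_trans (natDegree_pow_le) ?_
      have h0 : (1-X:ℤ[X]).natDegree ≤ 1 := le_trans (natDegree_sub_le 1 X) (by simp)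
      calc v * (1-X:ℤ[X]).natDegree ≤ v * 1 := Nat.mul_le_mul_left v h0
        _ = v := by ring
    have h3 : G.natDegree ≤ u + v := by
      rw [hG]
      exact le_trans (natDegree_mul_le) (add_le_add h1 h2)
    omega
  set F : ℕ → ℕ → ℚ := fun j p => (-1:ℚ)^p * ((G.coeff j : ℚ) *
     (((if ((a + 2*(p:ℤ)).toNat - j) % 2 = 0
        then (-1:ℤ)^(((a + 2*(p:ℤ)).toNat - j)/2) *
          ((2*(p:ℤ)+m).toNat.choose (((a + 2*(p:ℤ)).toNat - j)/2) : ℤ)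
        else 0) : ℤ) : ℚ)) with hF
  refine niceR_congr (a.natAbs + u + v + m.natAbs + 5) ?_
    (niceR_sum (Finset.range (u+v+1)) F ?_)
  · intro p hp
    have hn : u + v + 1 ≤ (a + 2*(p:ℤ)).toNat := by omega
    have hco := coeff_mul_expand ((1 - X^2 : ℤ[X])^((2*(p:ℤ)+m).toNat)) G
      (u+v+1) ((a + 2*(p:ℤ)).toNat) hGdeg hn
    rw [hco, Int.cast_sum, Finset.mul_sum]
    refine Finset.sum_congr rfl fun j hj => ?_
    rw [coeff_one_sub_sq_pow, Int.cast_mul]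
  · intro j hj
    by_cases hpar : (a - (j:ℤ)) % 2 = 0
    · set k : ℤ := (a - (j:ℤ))/2 with hkdef
      refine niceR_congr (a.natAbs + j + k.natAbs + m.natAbs + 5) ?_
        (niceR_const_mul ((G.coeff j : ℚ) * (-1)^(k.natAbs)) (niceR_choose m k))
      intro p hp
      have h2 : ((a + 2*(p:ℤ)).toNat - j) % 2 = 0 := by omega
      have h3 : ((a + 2*(p:ℤ)).toNat - j)/2 = ((p:ℤ)+k).toNat := by omega
      simp only [hF]
      rw [if_pos h2, h3]
      push_cast
      have h4 : ((-1:ℚ))^(k.natAbs) = (-1)^(p + ((p:ℤ)+k).toNat) :=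
        kr_neg_one_pow_congr _ _ (by omega)
      rw [pow_add] at h4
      rw [h4]; ring
    · refine niceR_congr (a.natAbs + j + 5) ?_ niceR_zero
      intro p hp
      have h2 : ¬(((a + 2*(p:ℤ)).toNat - j) % 2 = 0) := by omega
      simp only [hF]
      rw [if_neg h2]
      simp

/-- The Growth Theorem for Kravchuk polynomials: for fixed integers `a`, `b` and
residue `α ∈ {0,1,2,3}`, there is a rational function `P/Q` such that for all
sufficiently large `p` we have
`K(a+2p, b+2p; 4p+α-1) = (-1)^p * C(2p-1, p) * (P(p)/Q(p))`. -/
theorem stmt_9 (a b : ℤ) (α : ℕ) (hα : α ≤ 3) :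
    ∃ P Q : Polynomial ℚ, ∃ N : ℕ, ∀ p : ℕ, N ≤ p →
      0 ≤ a + 2 * p ∧ 0 ≤ b + 2 * p ∧
      a + 2 * p ≤ 4 * p + α - 1 ∧ b + 2 * p ≤ 4 * p + α - 1 ∧
      Q.eval (p : ℚ) ≠ 0 ∧
      (kravchuk (a + 2 * p).toNat (b + 2 * p).toNat ((4 * p + α : ℤ) - 1).toNat : ℚ) *
          Q.eval (p : ℚ) =
        (-1) ^ p * ((2 * p - 1).choose p) * P.eval (p : ℚ) := by
  set m : ℤ := min ((α:ℤ) - 1 - b) b with hm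
  set u : ℕ := ((α:ℤ) - 1 - b - m).toNat with hu
  set v : ℕ := (b - m).toNat with hv
  have hNice : NiceR (fun p : ℕ => (-1:ℚ)^p *
      (kravchuk (a + 2 * (p:ℤ)).toNat (b + 2 * (p:ℤ)).toNat ((4 * (p:ℤ) + α) - 1).toNat : ℚ)) := by
    refine niceR_congr (a.natAbs + b.natAbs + m.natAbs + α + 10) ?_ (main_aux a m u v)
    intro p hp
    congr 1
    have e1 : ((4 * (p:ℤ) + α) - 1).toNat - (b + 2 * (p:ℤ)).toNat
        = (2*(p:ℤ)+m).toNat + u := by omega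
    have e2 : (b + 2 * (p:ℤ)).toNat = (2*(p:ℤ)+m).toNat + v := by omega
    rw [kravchuk, e1, e2]
    congr 1
    rw [pow_add, pow_add, show (1 - X^2 : ℤ[X]) = (1+X)*(1-X) by ring, mul_pow]
    ring
  obtain ⟨P, Q, N, hPQN⟩ := hNice
  refine ⟨P, Q, max N (a.natAbs + b.natAbs + α + 10), fun p hp => ?_⟩
  have hp1 : N ≤ p := le_trans (le_max_left _ _) hp
  have hp2 : a.natAbs + b.natAbs + α + 10 ≤ p := le_trans (le_max_right _ _) hp
  obtain ⟨hq, he⟩ := hPQN p hp1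
  refine ⟨by omega, by omega, by omega, by omega, hq, ?_⟩
  have h2 : (-1:ℚ)^p * (-1)^p = 1 := by
    rw [← pow_add, ← two_mul, pow_mul]; norm_num
  set K : ℚ := (kravchuk (a + 2 * (p:ℤ)).toNat (b + 2 * (p:ℤ)).toNat ((4 * (p:ℤ) + α) - 1).toNat : ℚ) with hK
  linear_combination ((-1:ℚ)^p) * he - (K * Q.eval (p:ℚ)) * h2
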